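/- Let m ≥ 3 and suppose the biquadratic form P(x,y) = Σ_{i=1}^m x_i²y_i² + Σ_{i=1}^m x_i²y_{i+1}² (indices mod m) is written as a sum of R squares of bilinear forms L_t(x,y) = Σ_{i,j} c_{ij}^{(t)} x_i y_j. Then R ≥ 2m. Consequently the SOS rank of P equals 2m. -/

import Mathlib

/-- `c` gives an SOS decomposition of the biquadratic form `P` into `R` squares
of bilinear forms. -/
def IsSOSDecomp (m n R : ℕ) (P : (Fin m → ℝ) → (Fin n → ℝ) → ℝ)
    (c : Fin R → Fin m → Fin n → ℝ) : Prop :=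
  ∀ x y, P x y = ∑ t, (∑ i, ∑ j, c t i j * x i * y j)^2

/-- The SOS rank: the minimal number of squares of bilinear forms summing to `P`. -/
noncomputable def sosRank (m n : ℕ) (P : (Fin m → ℝ) → (Fin n → ℝ) → ℝ) : ℕ :=
  sInf {R | ∃ c : Fin R → Fin m → Fin n → ℝ, IsSOSDecomp m n R P c}

/-- The cyclic form `P_{m,m,2m}(x,y) = Σ x_i²y_i² + Σ x_i²y_{i+1}²` (indices mod m). -/
def Pcyclic (m : ℕ) (hm : 0 < m) : (Fin m → ℝ) → (Fin m → ℝ) → ℝ :=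
  fun x y => (∑ i, (x i)^2 * (y i)^2) +
    ∑ i, (x i)^2 * (y ⟨(i.val + 1) % m, Nat.mod_lt _ hm⟩)^2

section
variable {m R : ℕ}

def sig (hm : 0 < m) (a : Fin m) : Fin m := ⟨(a.val + 1) % m, Nat.mod_lt _ hm⟩


lemma sig_val (hm : 0 < m) (a : Fin m) :
    ((sig hm a).val = a.val + 1 ∧ a.val + 1 < m) ∨ ((sig hm a).val = 0 ∧ a.val + 1 = m) := by
  rcases Nat.lt_or_ge (a.val + 1) m with h | h
  · exact Or.inl ⟨Nat.mod_eq_of_lt h, h⟩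
  · have : a.val + 1 = m := le_antisymm a.isLt h
    exact Or.inr ⟨by simp [sig, this], this⟩

lemma sig_ne' (hm : 0 < m) (hm3 : 3 ≤ m) (a : Fin m) : sig hm a ≠ a := by
  rcases sig_val hm a with ⟨h1, h2⟩ | ⟨h1, h2⟩ <;>
    (intro hc; rw [Fin.ext_iff] at hc; omega)

lemma sig_inj' (hm : 0 < m) {a b : Fin m} (h' : sig hm a = sig hm b) : a = b := by
  rw [Fin.ext_iff] at h' ⊢
  rcases sig_val hm a with ⟨h1, h2⟩ | ⟨h1, h2⟩ <;>
    rcases sig_val hm b with ⟨h3, h4⟩ | ⟨h3, h4⟩ <;> omega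

lemma sig_sig_ne' (hm : 0 < m) (hm3 : 3 ≤ m) (a : Fin m) : sig hm (sig hm a) ≠ a := by
  rcases sig_val hm a with ⟨h1, h2⟩ | ⟨h1, h2⟩ <;>
    rcases sig_val hm (sig hm a) with ⟨h3, h4⟩ | ⟨h3, h4⟩ <;>
    (intro hc; rw [Fin.ext_iff] at hc; omega)

def ind (a : Fin m) : Fin m → ℝ := fun i => if i = a then 1 else 0

lemma sum_ind_mul (a : Fin m) (g : Fin m → ℝ) : ∑ i, (ind a i)^2 * g i = g a := by
  simp [ind, apply_ite (·^2), ite_mul, Finset.sum_ite_eq]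

lemma ind2_sq {a a' : Fin m} (h : a ≠ a') (i : Fin m) :
    (ind a i + ind a' i)^2 = (ind a i)^2 + (ind a' i)^2 := by
  unfold ind; split_ifs with h1 h2 h2 <;> first | (exfalso; exact h (h1 ▸ h2 ▸ rfl)) | ring

lemma ind_mul_ind {b b' : Fin m} (h : b ≠ b') (u : Fin m) : ind b u * ind b' u = 0 := by
  unfold ind; split_ifs with h1 h2 h2 <;> first | (exfalso; exact h (h1 ▸ h2 ▸ rfl)) | ring

lemma P_ind_left (hm : 0 < m) (a : Fin m) (y : Fin m → ℝ) :
    Pcyclic m hm (ind a) y = (y a)^2 + (y (sig hm a))^2 := by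
  unfold Pcyclic
  rw [sum_ind_mul a (fun i => (y i)^2),
    sum_ind_mul a (fun i => (y ⟨(i.val + 1) % m, Nat.mod_lt _ hm⟩)^2)]
  rfl

lemma P_ind2_left (hm : 0 < m) {a a' : Fin m} (h : a ≠ a') (y : Fin m → ℝ) :
    Pcyclic m hm (fun i => ind a i + ind a' i) y =
      (y a)^2 + (y (sig hm a))^2 + ((y a')^2 + (y (sig hm a'))^2) := by
  unfold Pcyclic
  simp only [ind2_sq h]
  simp only [add_mul, Finset.sum_add_distrib]
  rw [sum_ind_mul a (fun i => (y i)^2), sum_ind_mul a' (fun i => (y i)^2),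
    sum_ind_mul a (fun i => (y ⟨(i.val + 1) % m, Nat.mod_lt _ hm⟩)^2),
    sum_ind_mul a' (fun i => (y ⟨(i.val + 1) % m, Nat.mod_lt _ hm⟩)^2)]
  simp only [sig]
  ring

lemma inner_ss (c : Fin R → Fin m → Fin m → ℝ) (t : Fin R) (a b : Fin m) :
    (∑ i, ∑ j, c t i j * ind a i * ind b j) = c t a b := by
  simp [ind, mul_ite, ite_mul, Finset.sum_ite_eq']

lemma inner_sd (c : Fin R → Fin m → Fin m → ℝ) (t : Fin R) (a b b' : Fin m) :
    (∑ i, ∑ j, c t i j * ind a i * (ind b j + ind b' j)) = c t a b + c t a b' := by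
  simp only [mul_add, Finset.sum_add_distrib, inner_ss]

lemma inner_ds (c : Fin R → Fin m → Fin m → ℝ) (t : Fin R) (a a' b : Fin m) :
    (∑ i, ∑ j, c t i j * (ind a i + ind a' i) * ind b j) = c t a b + c t a' b := by
  simp only [mul_add, add_mul, Finset.sum_add_distrib, inner_ss]

lemma inner_dd (c : Fin R → Fin m → Fin m → ℝ) (t : Fin R) (a a' b b' : Fin m) :
    (∑ i, ∑ j, c t i j * (ind a i + ind a' i) * (ind b j + ind b' j))
      = c t a b + c t a b' + c t a' b + c t a' b' := by
  simp only [mul_add, add_mul, Finset.sum_add_distrib, inner_ss]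
  ring

variable (hm : 0 < m) {c : Fin R → Fin m → Fin m → ℝ}
  (h : IsSOSDecomp m m R (Pcyclic m hm) c)

include h

lemma S1 (a b : Fin m) :
    ∑ t, c t a b * c t a b =
      (if a = b then (1:ℝ) else 0) + (if sig hm a = b then (1:ℝ) else 0) := by
  have h1 := h (ind a) (ind b)
  rw [P_ind_left hm] at h1
  simp only [inner_ss] at h1
  have e1 : (ind b a)^2 = (if a = b then (1:ℝ) else 0) := by
    unfold ind; split_ifs <;> ring
  have e2 : (ind b (sig hm a))^2 = (if sig hm a = b then (1:ℝ) else 0) := by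
    unfold ind; split_ifs <;> ring
  rw [e1, e2] at h1
  rw [h1]
  exact Finset.sum_congr rfl fun t _ => by ring

lemma D2 (a : Fin m) {b b' : Fin m} (hbb : b ≠ b') : ∑ t, c t a b * c t a b' = 0 := by
  have h1 := h (ind a) (fun j => ind b j + ind b' j)
  rw [P_ind_left hm] at h1
  simp only [inner_sd] at h1
  have expand : ∀ p q : ℝ, (p+q)^2 = p*p + q*q + 2*(p*q) := by intros; ring
  simp only [expand] at h1
  simp only [Finset.sum_add_distrib, ← Finset.mul_sum] at h1
  rw [ind_mul_ind hbb a, ind_mul_ind hbb (sig hm a)] at h1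
  have q : ∀ u v : Fin m, ind u v * ind u v = if v = u then (1:ℝ) else 0 := by
    intro u v; unfold ind; split_ifs <;> ring
  simp only [q] at h1
  have e1 := S1 hm h a b
  have e2 := S1 hm h a b'
  linarith [h1, e1, e2]

lemma D3 {a a' : Fin m} (b : Fin m) (haa : a ≠ a') : ∑ t, c t a b * c t a' b = 0 := by
  have h1 := h (fun i => ind a i + ind a' i) (ind b)
  rw [P_ind2_left hm haa] at h1
  simp only [inner_ds] at h1
  have expand : ∀ p q : ℝ, (p+q)^2 = p*p + q*q + 2*(p*q) := by intros; ring
  simp only [expand] at h1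
  simp only [Finset.sum_add_distrib, ← Finset.mul_sum] at h1
  have q : ∀ u v : Fin m, (ind u v)^2 = if v = u then (1:ℝ) else 0 := by
    intro u v; unfold ind; split_ifs <;> ring
  simp only [q] at h1
  have e1 := S1 hm h a b
  have e2 := S1 hm h a' b
  linarith [h1, e1, e2]

set_option maxHeartbeats 1000000 in
lemma D4 {a a' b b' : Fin m} (haa : a ≠ a') (hbb : b ≠ b') :
    ∑ t, c t a b * c t a' b' + ∑ t, c t a b' * c t a' b = 0 := by
  have h1 := h (fun i => ind a i + ind a' i) (fun j => ind b j + ind b' j)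
  rw [P_ind2_left hm haa] at h1
  have ysq : ∀ u : Fin m, (ind b u + ind b' u)^2 =
      (if u = b then (1:ℝ) else 0) + (if u = b' then (1:ℝ) else 0) := by
    intro u; unfold ind
    split_ifs with p q q <;> first | (exfalso; exact hbb (p ▸ q ▸ rfl)) | ring
  simp only [inner_dd, ysq] at h1
  have expand4 : ∀ p q r s : ℝ, (p+q+r+s)^2 =
      p*p + q*q + r*r + s*s + 2*(p*q) + 2*(p*r) + 2*(p*s) + 2*(q*r) + 2*(q*s) + 2*(r*s) := by
    intros; ring
  simp only [expand4] at h1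
  simp only [Finset.sum_add_distrib] at h1
  simp only [← Finset.mul_sum] at h1
  have e1 := S1 hm h a b
  have e2 := S1 hm h a b'
  have e3 := S1 hm h a' b
  have e4 := S1 hm h a' b'
  have d1 := D2 hm h a hbb
  have d2 := D2 hm h a' hbb
  have d3 := D3 hm h b haa
  have d4 := D3 hm h b' haa
  linarith [h1, e1, e2, e3, e4, d1, d2, d3, d4]

lemma czero {a b : Fin m} (h1 : a ≠ b) (h2 : sig hm a ≠ b) : ∀ t, c t a b = 0 := by
  have hs := S1 hm h a b
  rw [if_neg h1, if_neg h2, add_zero] at hs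
  intro t
  have := Finset.sum_eq_zero_iff_of_nonneg (fun t _ => mul_self_nonneg (c t a b)) |>.mp hs t
    (Finset.mem_univ t)
  nlinarith [this]

lemma offdiag1 (hm3 : 3 ≤ m) (k l : Fin m) :
    ∑ t, c t k k * c t l (sig hm l) = 0 := by
  have f1 : ∀ a : Fin m, sig hm a ≠ a := sig_ne' hm hm3
  by_cases hkl : k = l
  · subst hkl
    exact D2 hm h k (f1 k).symm
  · by_cases hk : k = sig hm l
    · have := D3 hm h (a := k) (a' := l) k hkl
      rw [← hk]
      exact this
    · have hD := D4 hm h (a := k) (a' := l) (b := k) (b' := sig hm l) hkl hk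
      have hz : ∀ t, c t l k = 0 :=
        czero hm h (Ne.symm hkl) (fun e => hk e.symm)
      have h2 : ∑ t, c t k (sig hm l) * c t l k = 0 :=
        Finset.sum_eq_zero fun t _ => by rw [hz t, mul_zero]
      linarith

lemma ortho (hm3 : 3 ≤ m) (α β : Fin m ⊕ Fin m) :
    ∑ t, (Sum.elim (fun k => fun t => c t k k)
        (fun k => fun t => c t k (sig hm k)) α) t *
      (Sum.elim (fun k => fun t => c t k k)
        (fun k => fun t => c t k (sig hm k)) β) t = if α = β then 1 else 0 := by
  have f1 : ∀ a : Fin m, sig hm a ≠ a := sig_ne' hm hm3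
  have f3 : ∀ a : Fin m, sig hm (sig hm a) ≠ a := sig_sig_ne' hm hm3
  rcases α with k | k <;> rcases β with l | l <;> simp only [Sum.elim_inl, Sum.elim_inr]
  · by_cases hkl : k = l
    · subst hkl
      rw [if_pos rfl, S1 hm h k k, if_pos rfl, if_neg (f1 k), add_zero]
    · rw [if_neg (by simpa using hkl)]
      have hD := D4 hm h (a := k) (a' := l) (b := k) (b' := l) hkl hkl
      have h2 : ∑ t, c t k l * c t l k = 0 := by
        by_cases hσ : l = sig hm k
        · have hz : ∀ t, c t l k = 0 := by
            apply czero hm h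
            · rw [hσ]; exact f1 k
            · rw [hσ]; exact f3 k
          exact Finset.sum_eq_zero fun t _ => by rw [hz t, mul_zero]
        · have hz : ∀ t, c t k l = 0 := czero hm h hkl (fun e => hσ e.symm)
          exact Finset.sum_eq_zero fun t _ => by rw [hz t, zero_mul]
      linarith
  · rw [if_neg (by simp)]
    exact offdiag1 hm h hm3 k l
  · rw [if_neg (by simp)]
    rw [Finset.sum_congr rfl fun t _ => mul_comm _ _]
    exact offdiag1 hm h hm3 l k
  · by_cases hkl : k = l
    · subst hkl
      rw [if_pos rfl, S1 hm h k (sig hm k), if_pos rfl, if_neg (Ne.symm (f1 k))]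
      ring
    · rw [if_neg (by simpa using hkl)]
      have hσσ : sig hm k ≠ sig hm l := fun e => hkl (sig_inj' hm e)
      have hD := D4 hm h (a := k) (a' := l) (b := sig hm k) (b' := sig hm l) hkl hσσ
      have h2 : ∑ t, c t k (sig hm l) * c t l (sig hm k) = 0 := by
        by_cases hσ : sig hm l = k
        · have hz : ∀ t, c t l (sig hm k) = 0 := by
            apply czero hm h
            · intro e; exact f3 k (by rw [← e, hσ])
            · exact fun e => hkl (sig_inj' hm e).symm
          exact Finset.sum_eq_zero fun t _ => by rw [hz t, mul_zero]
        · have hz : ∀ t, c t k (sig hm l) = 0 := by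
            apply czero hm h
            · exact fun e => hσ e.symm
            · exact fun e => hkl (sig_inj' hm e)
          exact Finset.sum_eq_zero fun t _ => by rw [hz t, zero_mul]
      linarith



lemma lowerBound (hm3 : 3 ≤ m) : 2 * m ≤ R := by
  set W : Fin m ⊕ Fin m → EuclideanSpace ℝ (Fin R) :=
    fun α => WithLp.toLp 2 (Sum.elim (fun k => fun t => c t k k) (fun k => fun t => c t k (sig hm k)) α) with hW
  have horth : Orthonormal ℝ W := by
    rw [orthonormal_iff_ite]
    intro α β
    have hin : (inner ℝ (W α) (W β) : ℝ) = ∑ t, W α t * W β t := by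
      simp [PiLp.inner_apply, RCLike.inner_apply, starRingEnd_apply, star_trivial, mul_comm]
    rw [hin]
    exact ortho hm h hm3 α β
  have hcard := horth.linearIndependent.fintype_card_le_finrank
  simp at hcard
  omega

end

section
variable {m : ℕ}

lemma upper (hm : 0 < m) :
    ∃ c : Fin (2*m) → Fin m → Fin m → ℝ, IsSOSDecomp m m (2*m) (Pcyclic m hm) c := by
  classical
  set I2 : Fin (2*m) → Fin m := fun t => ⟨t.val % m, Nat.mod_lt _ hm⟩ with hI2
  set J2 : Fin (2*m) → Fin m := fun t => if t.val < m then I2 t else sig hm (I2 t) with hJ2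
  refine ⟨fun t i j => (if i = I2 t then 1 else 0) * (if j = J2 t then 1 else 0), ?_⟩
  intro x y
  have hinner : ∀ t : Fin (2*m),
      (∑ i, ∑ j, ((if i = I2 t then (1:ℝ) else 0) * (if j = J2 t then 1 else 0)) * x i * y j)
        = x (I2 t) * y (J2 t) := by
    intro t
    simp [ite_mul, mul_ite, Finset.sum_ite_eq']
  simp only [hinner]
  set e : Fin m ⊕ Fin m ≃ Fin (2*m) := finSumFinEquiv.trans (finCongr (two_mul m).symm) with he
  rw [← Equiv.sum_comp e (fun t => (x (I2 t) * y (J2 t))^2), Fintype.sum_sum_type]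
  have hl : ∀ k : Fin m, (e (Sum.inl k)).val = k.val := by
    intro k; simp [he]
  have hr : ∀ k : Fin m, (e (Sum.inr k)).val = m + k.val := by
    intro k; simp [he]; omega
  have hIl : ∀ k : Fin m, I2 (e (Sum.inl k)) = k := by
    intro k; rw [hI2]; apply Fin.ext; simp [hl k, Nat.mod_eq_of_lt k.isLt]
  have hIr : ∀ k : Fin m, I2 (e (Sum.inr k)) = k := by
    intro k; rw [hI2]; apply Fin.ext; simp [hr k, Nat.add_mod_left, Nat.mod_eq_of_lt k.isLt]
  have hJl : ∀ k : Fin m, J2 (e (Sum.inl k)) = k := by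
    intro k; rw [hJ2]; simp only [hl k]; rw [if_pos k.isLt]; exact hIl k
  have hJr : ∀ k : Fin m, J2 (e (Sum.inr k)) = sig hm k := by
    intro k; rw [hJ2]; simp only [hr k]; rw [if_neg (by omega)]; rw [hIr k]
  unfold Pcyclic
  congr 1
  · exact Finset.sum_congr rfl fun k _ => by rw [hIl k, hJl k]; ring
  · exact Finset.sum_congr rfl fun k _ => by
      rw [hIr k, hJr k]
      show (x k)^2 * (y (sig hm k))^2 = (x k * y (sig hm k))^2
      ring

end

/-- any SOS decomposition of `P_{m,m,2m}` uses at least `2m`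
squares; consequently its SOS rank is exactly `2m`. -/
theorem Pcyclic_sosRank (m : ℕ) (hm : 3 ≤ m) :
    (∀ (R : ℕ) (c : Fin R → Fin m → Fin m → ℝ),
        IsSOSDecomp m m R (Pcyclic m (by omega)) c → 2 * m ≤ R) ∧
    sosRank m m (Pcyclic m (by omega)) = 2 * m := by
  have hm0 : 0 < m := by omega
  have hlow : ∀ (R : ℕ) (c : Fin R → Fin m → Fin m → ℝ),
      IsSOSDecomp m m R (Pcyclic m (by omega)) c → 2 * m ≤ R := by
    intro R c hc
    exact lowerBound hm0 hc hm
  refine ⟨hlow, ?_⟩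
  unfold sosRank
  apply le_antisymm
  · apply Nat.sInf_le
    obtain ⟨c2, hc2⟩ := upper hm0
    exact ⟨c2, hc2⟩
  · apply le_csInf
    · obtain ⟨c2, hc2⟩ := upper hm0
      exact ⟨2 * m, c2, hc2⟩
    · rintro b ⟨cb, hcb⟩
      exact hlow b cb hcb
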